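/- arXiv:1407.2697 — 6 statements merged into one kernel-verified Lean document; each statement's English description precedes it below -/
import Mathlib

section
/- For a concave function h : ℕ → ℝ with h(0) = 0 and h non-decreasing, the function Ω(x) = Σ_{k=0}^{m-1} (h(k+1) − h(k)) |x_{(k)}|, where |x_{(0)}| ≥ |x_{(1)}| ≥ ... ≥ |x_{(m-1)}| is the decreasing rearrangement of the absolute values of x ∈ ℝ^m, is a convex function of x. -/
open Finset

/-- The `(k+1)`-th largest absolute value among the entries of `x`. -/
noncomputable def sortedAbs {m : ℕ} (x : Fin m → ℝ) : Fin m → ℝ :=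
  fun k => |x (Tuple.sort (fun i => -|x i|) k)|

/-- The submodular-relaxation regularizer `Ω(x) = ∑ k c k * |x_{(k)}|`. -/
noncomputable def omegaReg {m : ℕ} (c : ℕ → ℝ) (x : Fin m → ℝ) : ℝ :=
  ∑ k : Fin m, c k * sortedAbs x k

lemma sortedAbs_antitone {m : ℕ} (x : Fin m → ℝ) : Antitone (sortedAbs x) := by
  intro i j hij
  have := Tuple.monotone_sort (fun i => -|x i|) hij
  simp only [Function.comp_apply] at this
  simpa [sortedAbs] using neg_le_neg_iff.mp this

/-- Key rearrangement bound: for any permutation `σ`,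
`∑ k, c k * |x (σ k)| ≤ Ω(x)`, provided `c` is antitone. -/
lemma sum_perm_le_omegaReg {m : ℕ} (c : ℕ → ℝ) (hc : Antitone c)
    (x : Fin m → ℝ) (σ : Equiv.Perm (Fin m)) :
    ∑ k : Fin m, c k * |x (σ k)| ≤ omegaReg c x := by
  set s := Tuple.sort (fun i => -|x i|) with hs
  set τ : Equiv.Perm (Fin m) := σ.trans s⁻¹ with hτ
  have hrw : ∀ k : Fin m, |x (σ k)| = sortedAbs x (τ k) := by
    intro k
    simp [sortedAbs, hτ, hs]
  have hmono : Monovary (fun k : Fin m => c k) (sortedAbs x) := by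
    intro i j hij
    have hji : j ≤ i := by
      by_contra hlt
      exact absurd (sortedAbs_antitone x (le_of_not_ge hlt)) (not_le.mpr hij)
    exact hc (by exact_mod_cast Fin.le_iff_val_le_val.mp hji)
  have := hmono.sum_smul_comp_perm_le_sum_smul (σ := τ)
  simp only [smul_eq_mul] at this
  calc ∑ k : Fin m, c k * |x (σ k)| = ∑ k : Fin m, c k * sortedAbs x (τ k) := by
        simp_rw [hrw]
    _ ≤ ∑ k : Fin m, c k * sortedAbs x k := this
    _ = omegaReg c x := rfl

/-- for `h : ℕ → ℝ` concave, non-decreasing, with `h 0 = 0`, the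
function `Ω(x) = ∑_k (h(k+1) − h k) |x_{(k)}|` (decreasing rearrangement of the
absolute values of `x`) is convex. -/
theorem omegaReg_convexOn (m : ℕ) (h : ℕ → ℝ)
    (h0 : h 0 = 0)
    (hmono : ∀ k : ℕ, h k ≤ h (k + 1))
    (hconc : ∀ k : ℕ, 1 ≤ k → h (k + 1) - h k ≤ h k - h (k - 1)) :
    ConvexOn ℝ Set.univ (omegaReg (m := m) (fun k => h (k + 1) - h k)) := by
  set c : ℕ → ℝ := fun k => h (k + 1) - h k with hcdef
  have hc0 : ∀ k, 0 ≤ c k := fun k => by simp [hcdef]; linarith [hmono k]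
  have hcanti : Antitone c := by
    apply antitone_nat_of_succ_le
    intro k
    have := hconc (k + 1) (Nat.le_add_left 1 k)
    simpa [hcdef] using this
  refine ⟨convex_univ, fun x _ y _ a b ha hb hab => ?_⟩
  set z : Fin m → ℝ := a • x + b • y with hz
  set s := Tuple.sort (fun i => -|z i|) with hs
  have hzval : omegaReg c z = ∑ k : Fin m, c k * |z (s k)| := rfl
  have hstep : ∀ k : Fin m, c k * |z (s k)| ≤
      a * (c k * |x (s k)|) + b * (c k * |y (s k)|) := by
    intro k
    have habs : |z (s k)| ≤ a * |x (s k)| + b * |y (s k)| := by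
      have : z (s k) = a * x (s k) + b * y (s k) := by simp [hz]
      rw [this]
      calc |a * x (s k) + b * y (s k)| ≤ |a * x (s k)| + |b * y (s k)| := abs_add_le _ _
        _ = a * |x (s k)| + b * |y (s k)| := by
            rw [abs_mul, abs_mul, abs_of_nonneg ha, abs_of_nonneg hb]
    nlinarith [hc0 k]
  calc omegaReg c z ≤ ∑ k : Fin m, (a * (c k * |x (s k)|) + b * (c k * |y (s k)|)) := by
        rw [hzval]; exact Finset.sum_le_sum fun k _ => hstep k
    _ = a * ∑ k : Fin m, c k * |x (s k)| + b * ∑ k : Fin m, c k * |y (s k)| := by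
        rw [Finset.sum_add_distrib, Finset.mul_sum, Finset.mul_sum]
    _ ≤ a * omegaReg c x + b * omegaReg c y := by
        have hx := sum_perm_le_omegaReg c hcanti x s
        have hy := sum_perm_le_omegaReg c hcanti y s
        have := mul_le_mul_of_nonneg_left hx ha
        have := mul_le_mul_of_nonneg_left hy hb
        nlinarith
    _ = a • omegaReg c x + b • omegaReg c y := by simp
end

section
/- The function Ω defined by Ω(x) = Σ_{k} (h(k+1) − h(k)) |x_{(k)}| (decreasing rearrangement of absolute values, with h concave non-decreasing and h(0)=0) is absolutely homogeneous: Ω(c·x) = |c|·Ω(x) for all scalars c, and satisfies the triangle inequality Ω(x + y) ≤ Ω(x) + Ω(y); hence Ω is a seminorm. -/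
open Finset

/-- Rearrangement bound: for any permutation, weighting by nonincreasing `c`. -/
lemma sum_perm_le {m : ℕ} (c : ℕ → ℝ) (hanti : ∀ k, c (k + 1) ≤ c k)
    (x : Fin m → ℝ) (σ : Equiv.Perm (Fin m)) :
    ∑ k : Fin m, c k * |x (σ k)| ≤ omegaReg c x := by
  set τ := Tuple.sort (fun i => -|x i|) with hτ
  have hc : Antitone (fun k : Fin m => c k) := by
    intro i j hij
    exact (antitone_nat_of_succ_le hanti) (by exact_mod_cast hij)
  have hg : Antitone (sortedAbs x) := sortedAbs_antitone x
  have hmono : Monovary (fun k : Fin m => c k) (sortedAbs x) := hc.monovary hg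
  have key := hmono.sum_smul_comp_perm_le_sum_smul (σ := σ.trans τ.symm)
  simp only [smul_eq_mul] at key
  calc ∑ k : Fin m, c k * |x (σ k)|
      = ∑ k : Fin m, c k * sortedAbs x ((σ.trans τ.symm) k) := by
        apply Finset.sum_congr rfl
        intro k _
        simp [sortedAbs, Equiv.trans_apply, ← hτ]
    _ ≤ omegaReg c x := key

lemma sortedAbs_smul {m : ℕ} (a : ℝ) (x : Fin m → ℝ) :
    sortedAbs (a • x) = fun k => |a| * sortedAbs x k := by
  funext k
  have hax : ∀ i, (a • x) i = a * x i := fun i => rfl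
  set f : Fin m → ℝ := fun i => -|(a • x) i| with hf
  set σ := Tuple.sort (fun i => -|x i|) with hσ
  have hmono : Monotone (f ∘ σ) := by
    intro i j hij
    have h1 : -|x (σ i)| ≤ -|x (σ j)| := Tuple.monotone_sort (fun i => -|x i|) hij
    have h2 : |x (σ j)| ≤ |x (σ i)| := by linarith
    simp only [Function.comp, hf, hax, abs_mul]
    have := mul_le_mul_of_nonneg_left h2 (abs_nonneg a)
    linarith
  have heq : f ∘ σ = f ∘ Tuple.sort f := Tuple.comp_sort_eq_comp_iff_monotone.mpr hmono
  have heqk : f (σ k) = f (Tuple.sort f k) := congrFun heq k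
  have : |(a • x) (Tuple.sort f k)| = |(a • x) (σ k)| := by
    have := neg_injective heqk
    simpa [hf] using this.symm
  calc sortedAbs (a • x) k = |(a • x) (Tuple.sort f k)| := rfl
    _ = |(a • x) (σ k)| := this
    _ = |a| * sortedAbs x k := by rw [hax, abs_mul]; rfl

/-- with coefficients `c k = h(k+1) − h k` non-negative and
non-increasing (from `h` non-decreasing concave, `h 0 = 0`), `Ω` is absolutely
homogeneous and subadditive, hence a seminorm. -/
theorem omegaReg_seminorm (m : ℕ) (c : ℕ → ℝ)
    (hnonneg : ∀ k, 0 ≤ c k)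
    (hanti : ∀ k, c (k + 1) ≤ c k) :
    (∀ (a : ℝ) (x : Fin m → ℝ), omegaReg c (a • x) = |a| * omegaReg c x) ∧
    (∀ x y : Fin m → ℝ, omegaReg c (x + y) ≤ omegaReg c x + omegaReg c y) := by
  constructor
  · intro a x
    simp only [omegaReg, sortedAbs_smul, Finset.mul_sum]
    apply Finset.sum_congr rfl
    intro k _
    ring
  · intro x y
    set τ := Tuple.sort (fun i => -|(x + y) i|) with hτ
    have step1 : omegaReg c (x + y) ≤
        ∑ k : Fin m, c k * |x (τ k)| + ∑ k : Fin m, c k * |y (τ k)| := by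
      rw [← Finset.sum_add_distrib]
      apply Finset.sum_le_sum
      intro k _
      have habs : |(x + y) (τ k)| ≤ |x (τ k)| + |y (τ k)| := abs_add_le _ _
      have hdef : sortedAbs (x + y) k = |(x + y) (τ k)| := rfl
      calc c k * sortedAbs (x + y) k = c k * |(x + y) (τ k)| := by rw [hdef]
        _ ≤ c k * (|x (τ k)| + |y (τ k)|) := by
            exact mul_le_mul_of_nonneg_left habs (hnonneg k)
        _ = c k * |x (τ k)| + c k * |y (τ k)| := by ring
    have h2 := sum_perm_le c hanti x τ
    have h3 := sum_perm_le c hanti y τ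
    calc omegaReg c (x + y) ≤ _ := step1
      _ ≤ omegaReg c x + omegaReg c y := add_le_add h2 h3
end

section
/- At the unique minimizer x* of x ↦ Σ_k c_k |x_{(k)}| + (1/2)‖x − w‖² (with c non-negative non-increasing), each coordinate satisfies sign(x*_i) ∈ {0, sign(w_i)} and |x*_i| ≤ |w_i|; i.e., the proximal operator of Ω shrinks each coordinate towards zero without changing its sign. -/
open Finset

lemma omega_mono {m : ℕ} (c : ℕ → ℝ) (hnonneg : ∀ k, 0 ≤ c k)
    (hanti : ∀ k, c (k + 1) ≤ c k) (x y : Fin m → ℝ) (h : ∀ j, |y j| ≤ |x j|) :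
    omegaReg c y ≤ omegaReg c x := by
  unfold omegaReg sortedAbs
  set τ := Tuple.sort (fun i => -|x i|) with hτ
  set σ := Tuple.sort (fun i => -|y i|) with hσ
  have ha : Antitone (fun k => |x (τ k)|) := by
    intro a b hab
    have := Tuple.monotone_sort (fun i => -|x i|) hab
    simpa [hτ] using this
  have hc : Antitone (fun k : Fin m => c k) := by
    have hc' : Antitone c := antitone_nat_of_succ_le hanti
    intro a b hab
    exact hc' (by exact_mod_cast hab)
  have hmono : Monovary (fun k : Fin m => c (k : ℕ)) (fun k => |x (τ k)|) := by
    intro i j hij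
    rcases le_total j i with h' | h'
    · exact hc h'
    · exact absurd hij (not_lt.mpr (ha h'))
  calc ∑ k : Fin m, c k * |y (σ k)|
      ≤ ∑ k : Fin m, c k * |x (σ k)| :=
        Finset.sum_le_sum fun k _ =>
          mul_le_mul_of_nonneg_left (h _) (hnonneg _)
    _ = ∑ k : Fin m, c k * |x (τ ((τ⁻¹ * σ) k))| := by
        apply Finset.sum_congr rfl
        intro k _
        simp
    _ ≤ ∑ k : Fin m, c k * |x (τ k)| :=
        hmono.sum_mul_comp_perm_le_sum_mul (σ := τ⁻¹ * σ)

/-- at the minimizer `x*` of `Ω(x) + (1/2)‖x − w‖²`, every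
coordinate is shrunk towards zero without changing sign:
`|x*_i| ≤ |w_i|` and `sign(x*_i) ∈ {0, sign(w_i)}`. -/
theorem prox_shrinks_towards_zero (m : ℕ) (c : ℕ → ℝ) (w : Fin m → ℝ)
    (hnonneg : ∀ k, 0 ≤ c k)
    (hanti : ∀ k, c (k + 1) ≤ c k)
    (xstar : Fin m → ℝ)
    (hmin : ∀ y : Fin m → ℝ,
      omegaReg c xstar + (1 / 2) * ∑ i, (xstar i - w i) ^ 2 ≤
        omegaReg c y + (1 / 2) * ∑ i, (y i - w i) ^ 2) :
    ∀ i : Fin m, |xstar i| ≤ |w i| ∧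
      (Real.sign (xstar i) = 0 ∨ Real.sign (xstar i) = Real.sign (w i)) := by
  intro i
  have key : ∀ t : ℝ, |t| ≤ |xstar i| → (t - w i) ^ 2 < (xstar i - w i) ^ 2 → False := by
    intro t habs hlt
    set y := Function.update xstar i t with hy
    have hΩ : omegaReg c y ≤ omegaReg c xstar := by
      apply omega_mono c hnonneg hanti
      intro j
      by_cases hji : j = i
      · subst hji; simp [hy, habs]
      · simp [hy, Function.update_of_ne hji]
    have hsum1 : ∑ j, (y j - w j) ^ 2 =
        (t - w i) ^ 2 + ∑ j ∈ Finset.univ.erase i, (xstar j - w j) ^ 2 := by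
      rw [← Finset.add_sum_erase _ _ (Finset.mem_univ i)]
      congr 1
      · simp [hy]
      · apply Finset.sum_congr rfl
        intro j hj
        rw [hy, Function.update_of_ne (Finset.ne_of_mem_erase hj)]
    have hsum2 : ∑ j, (xstar j - w j) ^ 2 =
        (xstar i - w i) ^ 2 + ∑ j ∈ Finset.univ.erase i, (xstar j - w j) ^ 2 :=
      (Finset.add_sum_erase _ _ (Finset.mem_univ i)).symm
    have := hmin y
    rw [hsum1, hsum2] at this
    linarith
  have h1 : |xstar i| ≤ |w i| := by
    by_contra hcon
    push_neg at hcon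
    apply key (w i) hcon.le
    have hne : xstar i - w i ≠ 0 := by
      intro h
      have : xstar i = w i := by linarith [sub_eq_zero.mp h]
      rw [this] at hcon
      exact lt_irrefl _ hcon
    have : 0 < (xstar i - w i) ^ 2 := by positivity
    simpa using this
  refine ⟨h1, ?_⟩
  by_cases hx0 : xstar i = 0
  · left; simp [hx0]
  · right
    have hw0 : w i ≠ 0 := by
      intro h
      rw [h] at h1
      simp at h1
      exact hx0 h1
    have hprod : 0 < xstar i * w i := by
      by_contra hcon
      push_neg at hcon
      have hlt : xstar i * w i < 0 :=
        lt_of_le_of_ne hcon (mul_ne_zero hx0 hw0)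
      apply key (-xstar i) (by simp)
      nlinarith
    rcases lt_trichotomy (w i) 0 with hw | hw | hw
    · have hx : xstar i < 0 := by nlinarith
      rw [Real.sign_of_neg hx, Real.sign_of_neg hw]
    · exact absurd hw hw0
    · have hx : 0 < xstar i := by nlinarith
      rw [Real.sign_of_pos hx, Real.sign_of_pos hw]
end

section
/- Let F be a non-decreasing submodular function on 2^E with F(∅) = 0, and let f̂ be its Lovász extension. Then f̂ is convex on ℝ^E, positively homogeneous, and agrees with F on indicator vectors: f̂(1_A) = F(A) for all A ⊆ E. -/
open Finset

namespace LovaszAux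

variable {m : ℕ}

/-- Image under `σ` of the first `n` positions. -/
def pref (σ : Equiv.Perm (Fin m)) (n : ℕ) : Finset (Fin m) :=
  univ.filter fun i => (σ.symm i : ℕ) < n

lemma pref_zero (σ : Equiv.Perm (Fin m)) : pref σ 0 = ∅ := by simp [pref]

lemma pref_of_le (σ : Equiv.Perm (Fin m)) {n : ℕ} (h : m ≤ n) : pref σ n = univ := by
  ext i; simp [pref]; exact lt_of_lt_of_le (σ.symm i).isLt h

lemma pref_succ (σ : Equiv.Perm (Fin m)) {n : ℕ} (h : n < m) :
    pref σ (n + 1) = insert (σ ⟨n, h⟩) (pref σ n) := by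
  ext i
  simp only [pref, mem_filter, mem_univ, true_and, mem_insert, Nat.lt_succ_iff_lt_or_eq]
  constructor
  · rintro (h1 | h1)
    · exact Or.inr h1
    · left
      have : σ.symm i = ⟨n, h⟩ := Fin.ext h1
      rw [← this]; simp
  · rintro (rfl | h1)
    · right; simp
    · exact Or.inl h1

lemma notMem_pref (σ : Equiv.Perm (Fin m)) {n : ℕ} (h : n < m) :
    σ ⟨n, h⟩ ∉ pref σ n := by simp [pref]

lemma image_Iic (σ : Equiv.Perm (Fin m)) (k : Fin m) :
    (Finset.Iic k).image σ = pref σ (k + 1) := by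
  ext i
  simp only [mem_image, mem_Iic, pref, mem_filter, mem_univ, true_and, Nat.lt_succ_iff]
  constructor
  · rintro ⟨x, hx, rfl⟩; simpa using hx
  · intro h; exact ⟨σ.symm i, h, by simp⟩

lemma image_Iio (σ : Equiv.Perm (Fin m)) (k : Fin m) :
    (Finset.Iio k).image σ = pref σ k := by
  ext i
  simp only [mem_image, mem_Iio, pref, mem_filter, mem_univ, true_and]
  constructor
  · rintro ⟨x, hx, rfl⟩; simpa using hx
  · intro h; exact ⟨σ.symm i, h, by simp⟩

variable (F : Finset (Fin m) → ℝ)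

/-- The greedy vector associated to an ordering `σ`. -/
def gvec (σ : Equiv.Perm (Fin m)) : Fin m → ℝ :=
  fun i => F (pref σ ((σ.symm i : ℕ) + 1)) - F (pref σ (σ.symm i))

lemma gvec_apply (σ : Equiv.Perm (Fin m)) (k : Fin m) :
    gvec F σ (σ k) = F (pref σ ((k : ℕ) + 1)) - F (pref σ k) := by
  simp [gvec]

/-- The linear functional of the greedy vector. -/
def gfun (σ : Equiv.Perm (Fin m)) (w : Fin m → ℝ) : ℝ :=
  ∑ i, w i * gvec F σ i

lemma gfun_eq (σ : Equiv.Perm (Fin m)) (w : Fin m → ℝ) :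
    gfun F σ w = ∑ k : Fin m, w (σ k) * (F (pref σ ((k : ℕ) + 1)) - F (pref σ k)) := by
  rw [gfun, ← Equiv.sum_comp σ (fun i => w i * gvec F σ i)]
  exact Finset.sum_congr rfl fun k _ => by rw [gvec_apply]

lemma sum_pref (hF0 : F ∅ = 0) (σ : Equiv.Perm (Fin m)) :
    ∀ n : ℕ, ∑ i ∈ pref σ n, gvec F σ i = F (pref σ n) := by
  intro n
  induction n with
  | zero => simp [pref_zero, hF0]
  | succ n ih =>
    by_cases h : n < m
    · rw [pref_succ σ h, Finset.sum_insert (notMem_pref σ h), ih]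
      have : gvec F σ (σ ⟨n, h⟩) = F (pref σ (n + 1)) - F (pref σ n) := by
        simpa using gvec_apply F σ ⟨n, h⟩
      rw [this, pref_succ σ h]; ring
    · rw [pref_of_le σ (Nat.le_of_not_lt h), pref_of_le σ (le_trans (Nat.le_of_not_lt h) (Nat.le_succ n))] at *
      exact ih

lemma sum_gvec_le (hF0 : F ∅ = 0)
    (hFsub : ∀ A B : Finset (Fin m), F (A ∪ B) + F (A ∩ B) ≤ F A + F B)
    (σ : Equiv.Perm (Fin m)) (B : Finset (Fin m)) :
    ∑ i ∈ B, gvec F σ i ≤ F B := by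
  have key : ∀ n : ℕ, ∑ i ∈ B ∩ pref σ n, gvec F σ i ≤ F (B ∩ pref σ n) := by
    intro n
    induction n with
    | zero => simp [pref_zero, hF0]
    | succ n ih =>
      by_cases h : n < m
      · set e := σ ⟨n, h⟩ with he
        have hins : pref σ (n + 1) = insert e (pref σ n) := pref_succ σ h
        have hnot : e ∉ pref σ n := notMem_pref σ h
        by_cases heB : e ∈ B
        · have h1 : B ∩ pref σ (n + 1) = insert e (B ∩ pref σ n) := by
            rw [hins]; ext i
            simp only [mem_inter, mem_insert]
            constructor
            · rintro ⟨hiB, rfl | hi⟩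
              · exact Or.inl rfl
              · exact Or.inr ⟨hiB, hi⟩
            · rintro (rfl | ⟨hiB, hi⟩)
              · exact ⟨heB, Or.inl rfl⟩
              · exact ⟨hiB, Or.inr hi⟩
          have hnot' : e ∉ B ∩ pref σ n := fun hc => hnot (mem_inter.mp hc).2
          rw [h1, Finset.sum_insert hnot']
          have hg : gvec F σ e = F (pref σ (n + 1)) - F (pref σ n) := by
            simpa using gvec_apply F σ ⟨n, h⟩
          have hsub := hFsub (pref σ n) (B ∩ pref σ (n + 1))
          have hu : pref σ n ∪ (B ∩ pref σ (n + 1)) = pref σ (n + 1) := by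
            ext i
            simp only [mem_union, mem_inter, hins, mem_insert]
            constructor
            · rintro (hi | ⟨hiB, rfl | hi⟩)
              · exact Or.inr hi
              · exact Or.inl rfl
              · exact Or.inr hi
            · rintro (rfl | hi)
              · exact Or.inr ⟨heB, Or.inl rfl⟩
              · exact Or.inl hi
          have hi2 : pref σ n ∩ (B ∩ pref σ (n + 1)) = B ∩ pref σ n := by
            ext i
            simp only [mem_inter, hins, mem_insert]
            constructor
            · rintro ⟨hi, hiB, _⟩; exact ⟨hiB, hi⟩
            · rintro ⟨hiB, hi⟩; exact ⟨hi, hiB, Or.inr hi⟩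
          rw [hu, hi2] at hsub
          rw [h1] at hsub
          rw [hg]
          linarith
        · have h1 : B ∩ pref σ (n + 1) = B ∩ pref σ n := by
            rw [hins]; ext i
            simp only [mem_inter, mem_insert]
            constructor
            · rintro ⟨hiB, rfl | hi⟩
              · exact absurd hiB heB
              · exact ⟨hiB, hi⟩
            · rintro ⟨hiB, hi⟩; exact ⟨hiB, Or.inr hi⟩
          rw [h1]; exact ih
      · have h1 : pref σ (n + 1) = pref σ n := by
          rw [pref_of_le σ (Nat.le_of_not_lt h),
            pref_of_le σ (le_trans (Nat.le_of_not_lt h) (Nat.le_succ n))]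
        rw [h1]; exact ih
  have := key m
  rwa [pref_of_le σ le_rfl, Finset.inter_univ] at this

lemma sum_gvec_univ (hF0 : F ∅ = 0) (σ : Equiv.Perm (Fin m)) :
    ∑ i, gvec F σ i = F univ := by
  have := sum_pref F hF0 σ m
  rwa [pref_of_le σ le_rfl] at this

/-- Abel summation identity. -/
lemma abel (v Z : ℕ → ℝ) :
    ∀ n : ℕ, 1 ≤ n →
      ∑ j ∈ Finset.range n, v j * (Z (j + 1) - Z j) =
        v (n - 1) * Z n - v 0 * Z 0 + ∑ j ∈ Finset.Ico 1 n, (v (j - 1) - v j) * Z j := by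
  intro n
  induction n with
  | zero => omega
  | succ n ih =>
    intro _
    by_cases h : 1 ≤ n
    · rw [Finset.sum_range_succ, ih h, Finset.sum_Ico_succ_top h]
      simp only [Nat.add_sub_cancel]
      ring
    · have : n = 0 := by omega
      subst this
      simp
      ring
lemma inner_le (F : Finset (Fin m) → ℝ) (hF0 : F ∅ = 0)
    (w : Fin m → ℝ) (τ : Equiv.Perm (Fin m)) (hτ : Antitone fun k => w (τ k))
    (x : Fin m → ℝ) (hx1 : ∀ B : Finset (Fin m), ∑ i ∈ B, x i ≤ F B)
    (hx2 : ∑ i, x i = F univ) :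
    ∑ i, w i * x i ≤ gfun F τ w := by
  set v : ℕ → ℝ := fun j => if h : j < m then w (τ ⟨j, h⟩) else 0 with hv
  set X : ℕ → ℝ := fun n => ∑ i ∈ pref τ n, x i with hX
  set Y : ℕ → ℝ := fun n => F (pref τ n) with hY
  have hXd : ∀ k : Fin m, X ((k : ℕ) + 1) - X k = x (τ k) := by
    intro k
    have : X ((k : ℕ) + 1) = x (τ k) + X k := by
      rw [hX]
      simp only
      rw [pref_succ τ k.isLt, Finset.sum_insert (notMem_pref τ k.isLt)]
    rw [this]; ring
  have hvk : ∀ k : Fin m, v (k : ℕ) = w (τ k) := by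
    intro k; rw [hv]; simp
  have hLHS : ∑ i, w i * x i = ∑ j ∈ Finset.range m, v j * (X (j + 1) - X j) := by
    rw [← Equiv.sum_comp τ (fun i => w i * x i),
      ← Fin.sum_univ_eq_sum_range (fun j => v j * (X (j + 1) - X j)) m]
    exact Finset.sum_congr rfl fun k _ => by rw [hvk, hXd]
  have hYd : ∀ k : Fin m, Y ((k : ℕ) + 1) - Y k = F (pref τ ((k : ℕ) + 1)) - F (pref τ k) := by
    intro k; rfl
  have hRHS : gfun F τ w = ∑ j ∈ Finset.range m, v j * (Y (j + 1) - Y j) := by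
    rw [gfun_eq, ← Fin.sum_univ_eq_sum_range (fun j => v j * (Y (j + 1) - Y j)) m]
    exact Finset.sum_congr rfl fun k _ => by rw [hvk, hYd]
  rw [hLHS, hRHS]
  rcases Nat.eq_zero_or_pos m with hm | hm
  · subst hm; simp
  rw [abel v X m hm, abel v Y m hm]
  have h0X : X 0 = 0 := by simp [hX, pref_zero]
  have h0Y : Y 0 = 0 := by simp [hY, pref_zero, hF0]
  have hmXY : X m = Y m := by
    rw [hX, hY]; simp only [pref_of_le τ le_rfl]; exact hx2
  rw [h0X, h0Y, hmXY]
  have hsum : ∑ j ∈ Finset.Ico 1 m, (v (j - 1) - v j) * X j ≤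
      ∑ j ∈ Finset.Ico 1 m, (v (j - 1) - v j) * Y j := by
    apply Finset.sum_le_sum
    intro j hj
    rw [Finset.mem_Ico] at hj
    have hj1 : j - 1 < m := by omega
    have hjm : j < m := hj.2
    have hvv : v j ≤ v (j - 1) := by
      rw [hv]; simp only [dif_pos hj1, dif_pos hjm]
      exact hτ (Fin.mk_le_mk.mpr (by omega))
    have hXY : X j ≤ Y j := hx1 (pref τ j)
    exact mul_le_mul_of_nonneg_left hXY (by linarith)
  linarith

lemma exists_antitone (w : Fin m → ℝ) :
    ∃ σ : Equiv.Perm (Fin m), Antitone fun k => w (σ k) := by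
  refine ⟨Tuple.sort (fun i => -w i), fun a b hab => ?_⟩
  have := Tuple.monotone_sort (fun i => -w i) hab
  simp only [Function.comp_apply] at this
  linarith

end LovaszAux

open LovaszAux in
/-- let `F` be a non-decreasing submodular set function with
`F ∅ = 0` and let `L` be its Lovász extension (characterized by the sorted-sum
formula for every decreasing enumeration of the coordinates). Then `L` is
convex, positively homogeneous, and extends `F` on indicator vectors. -/
theorem lovasz_extension_properties (m : ℕ)
    (F : Finset (Fin m) → ℝ)
    (hF0 : F ∅ = 0)
    (hFmono : ∀ A B : Finset (Fin m), A ⊆ B → F A ≤ F B)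
    (hFsub : ∀ A B : Finset (Fin m), F (A ∪ B) + F (A ∩ B) ≤ F A + F B)
    (L : (Fin m → ℝ) → ℝ)
    (hL : ∀ (w : Fin m → ℝ) (σ : Equiv.Perm (Fin m)),
      Antitone (fun k => w (σ k)) →
      L w = ∑ k : Fin m,
        w (σ k) * (F ((Finset.Iic k).image σ) - F ((Finset.Iio k).image σ))) :
    ConvexOn ℝ Set.univ L ∧
    (∀ c : ℝ, 0 ≤ c → ∀ w : Fin m → ℝ, L (c • w) = c * L w) ∧
    (∀ A : Finset (Fin m), L (fun i => if i ∈ A then (1 : ℝ) else 0) = F A) := by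
  -- `L` agrees with the greedy linear functional for any sorting permutation
  have hLg : ∀ (w : Fin m → ℝ) (σ : Equiv.Perm (Fin m)),
      Antitone (fun k => w (σ k)) → L w = gfun F σ w := by
    intro w σ hσ
    rw [hL w σ hσ, gfun_eq]
    exact Finset.sum_congr rfl fun k _ => by rw [image_Iic, image_Iio]
  -- every greedy linear functional is a lower bound for `L`
  have hgle : ∀ (σ : Equiv.Perm (Fin m)) (w : Fin m → ℝ), gfun F σ w ≤ L w := by
    intro σ w
    obtain ⟨τ, hτ⟩ := exists_antitone w
    rw [hLg w τ hτ]
    exact inner_le F hF0 w τ hτ (gvec F σ) (sum_gvec_le F hF0 hFsub σ) (sum_gvec_univ F hF0 σ)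
  refine ⟨⟨convex_univ, ?_⟩, ?_, ?_⟩
  · -- convexity
    intro w1 _ w2 _ a b ha hb hab
    obtain ⟨σ, hσ⟩ := exists_antitone (a • w1 + b • w2)
    rw [hLg _ σ hσ]
    have hlin : gfun F σ (a • w1 + b • w2) = a * gfun F σ w1 + b * gfun F σ w2 := by
      simp only [gfun, Pi.add_apply, Pi.smul_apply, smul_eq_mul, Finset.mul_sum,
        ← Finset.sum_add_distrib]
      exact Finset.sum_congr rfl fun i _ => by ring
    rw [hlin]
    have h1 := mul_le_mul_of_nonneg_left (hgle σ w1) ha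
    have h2 := mul_le_mul_of_nonneg_left (hgle σ w2) hb
    simp only [smul_eq_mul]
    linarith
  · -- positive homogeneity
    intro c hc w
    obtain ⟨σ, hσ⟩ := exists_antitone w
    have hσ' : Antitone fun k => (c • w) (σ k) := by
      intro a b hab
      simp only [Pi.smul_apply, smul_eq_mul]
      exact mul_le_mul_of_nonneg_left (hσ hab) hc
    rw [hLg _ σ hσ', hLg w σ hσ]
    simp only [gfun, Pi.smul_apply, smul_eq_mul, Finset.mul_sum]
    exact Finset.sum_congr rfl fun i _ => by ring
  · -- extends `F` on indicators
    intro A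
    set w : Fin m → ℝ := fun i => if i ∈ A then (1 : ℝ) else 0 with hw
    obtain ⟨σ, hσ⟩ := exists_antitone w
    have hdc : ∀ k k' : Fin m, k ≤ k' → σ k' ∈ A → σ k ∈ A := by
      intro k k' hk hk'
      by_contra hc
      have h1 : w (σ k) = 0 := if_neg hc
      have h2 : w (σ k') = 1 := if_pos hk'
      have h3 : w (σ k') ≤ w (σ k) := hσ hk
      rw [h1, h2] at h3; linarith
    have hcard : (univ.filter fun k => σ k ∈ A).card = A.card := by
      have hset : (univ.filter fun k => σ k ∈ A) = A.image σ.symm := by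
        ext k
        simp only [mem_filter, mem_univ, true_and, Finset.mem_image]
        constructor
        · intro h; exact ⟨σ k, h, by simp⟩
        · rintro ⟨a, ha, rfl⟩; simpa using ha
      rw [hset, Finset.card_image_of_injective _ σ.symm.injective]
    have key : ∀ k : Fin m, σ k ∈ A ↔ (k : ℕ) < A.card := by
      intro k
      constructor
      · intro hk
        have hsub : Finset.Iic k ⊆ univ.filter fun k' => σ k' ∈ A := by
          intro j hj
          simp only [mem_filter, mem_univ, true_and]
          exact hdc j k (mem_Iic.mp hj) hk
        have := Finset.card_le_card hsub
        rw [Fin.card_Iic, hcard] at this; omega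
      · intro hk
        by_contra hc
        have hsub : (univ.filter fun k' => σ k' ∈ A) ⊆ Finset.Iio k := by
          intro j hj
          simp only [mem_filter, mem_univ, true_and] at hj
          rw [mem_Iio]
          by_contra hjk
          exact hc (hdc k j (le_of_not_gt hjk) hj)
        have := Finset.card_le_card hsub
        rw [Fin.card_Iio, hcard] at this; omega
    have hprefA : pref σ A.card = A := by
      ext i
      simp only [pref, mem_filter, mem_univ, true_and]
      rw [← key (σ.symm i)]
      simp
    have hsum : ∑ i, w i * gvec F σ i = ∑ i ∈ A, gvec F σ i := by
      rw [show ∑ i, w i * gvec F σ i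
          = ∑ i, (if i ∈ A then gvec F σ i else 0) from
        Finset.sum_congr rfl fun i _ => by by_cases h : i ∈ A <;> simp [hw, h]]
      rw [Finset.sum_ite_mem, Finset.univ_inter]
    rw [hLg w σ hσ]
    show ∑ i, w i * gvec F σ i = F A
    rw [hsum, ← hprefA, sum_pref F hF0 σ]
end

section
/- For F(A) = Σ_{v∈V} h(d_A(v)) with h tractable (non-decreasing, concave, h(0)=0), the Lovász extension of F evaluated at |X| (entrywise absolute value of a symmetric matrix X with zero diagonal contributions) equals Ω(X) = Σ_{i=1}^n Σ_{k=0}^{n-2} (h(k+1) − h(k)) |X_{i,(k)}|, where for each row i, |X_{i,(0)}| ≥ |X_{i,(1)}| ≥ ... are the off-diagonal entries of row i sorted by decreasing absolute value. -/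
open Finset

/-- Degree of vertex `v` in a set `A` of edges of the complete graph. -/
def edgeDeg {n : ℕ} (A : Finset {e : Sym2 (Fin n) // ¬ e.IsDiag}) (v : Fin n) : ℕ :=
  (A.filter (fun e => v ∈ e.1)).card

/-- One-sided comparison for antitone tuples equal up to a permutation. -/
lemma aux_antitone_le {m : ℕ} (f g : Fin m → ℝ) (hf : Antitone f) (hg : Antitone g)
    (ρ : Equiv.Perm (Fin m)) (hfg : ∀ j, f j = g (ρ j)) : ∀ j, f j ≤ g j := by
  intro j
  have hcard : ((Finset.Iic j).image ρ).card = (j : ℕ) + 1 := by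
    rw [Finset.card_image_of_injective _ ρ.injective, Fin.card_Iic]
  have : ∃ k ≤ j, j ≤ ρ k := by
    by_contra hcon
    push_neg at hcon
    have hsub : (Finset.Iic j).image ρ ⊆ Finset.Iio j := by
      intro x hx
      rcases Finset.mem_image.mp hx with ⟨k, hk, rfl⟩
      exact Finset.mem_Iio.mpr (hcon k (Finset.mem_Iic.mp hk))
    have := Finset.card_le_card hsub
    rw [hcard, Fin.card_Iio] at this
    omega
  rcases this with ⟨k, hk, hk'⟩
  calc f j ≤ f k := hf hk
    _ = g (ρ k) := hfg k
    _ ≤ g j := hg hk'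

/-- Two antitone tuples equal up to a permutation are equal. -/
lemma aux_antitone_eq {m : ℕ} (f g : Fin m → ℝ) (hf : Antitone f) (hg : Antitone g)
    (ρ : Equiv.Perm (Fin m)) (hfg : ∀ j, f j = g (ρ j)) : f = g := by
  funext j
  refine le_antisymm (aux_antitone_le f g hf hg ρ hfg j) (aux_antitone_le g f hg hf ρ.symm ?_ j)
  intro i
  rw [hfg (ρ.symm i), Equiv.apply_symm_apply]

/-- Edges containing `v` correspond to vertices different from `v`. -/
def edgeOther {n : ℕ} (v : Fin n) :
    {e : {e : Sym2 (Fin n) // ¬ e.IsDiag} // v ∈ e.1} ≃ {u : Fin n // u ≠ v} where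
  toFun e := ⟨Sym2.Mem.other' e.2, by
    have h := Sym2.other_ne e.1.2 e.2
    rwa [Sym2.other_eq_other'] at h⟩
  invFun u := ⟨⟨s(v, u.1), by
      rw [Sym2.mk_isDiag_iff]
      exact fun hvu => u.2 hvu.symm⟩, Sym2.mem_mk_left v u.1⟩
  left_inv e := by
    apply Subtype.ext
    apply Subtype.ext
    exact Sym2.other_spec' e.2
  right_inv u := by
    apply Subtype.ext
    have h : v ∈ (s(v, u.1) : Sym2 (Fin n)) := by simp
    exact Sym2.congr_right.mp (Sym2.other_spec' h)

/-- for `F(A) = ∑_v h(d_A(v))` with `h` tractable, the Lovász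
extension of `F` evaluated at the entrywise absolute values of a symmetric
matrix `X` equals `Ω(X) = ∑_i ∑_k (h(k+1) − h(k)) |X_{i,(k)}|`, where each row's
off-diagonal entries are sorted by decreasing absolute value. -/
theorem lovasz_extension_degree_prior (n : ℕ) (h : ℕ → ℝ)
    (h0 : h 0 = 0)
    (hmono : ∀ k : ℕ, h k ≤ h (k + 1))
    (hconc : ∀ k : ℕ, 1 ≤ k → h (k + 1) - h k ≤ h k - h (k - 1))
    (F : Finset {e : Sym2 (Fin n) // ¬ e.IsDiag} → ℝ)
    (hF : ∀ A, F A = ∑ v : Fin n, h (edgeDeg A v))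
    (L : ({e : Sym2 (Fin n) // ¬ e.IsDiag} → ℝ) → ℝ)
    -- `L` is the Lovász extension of `F`:
    (hL : ∀ (w : {e : Sym2 (Fin n) // ¬ e.IsDiag} → ℝ)
        (σ : Fin (Fintype.card {e : Sym2 (Fin n) // ¬ e.IsDiag}) ≃
          {e : Sym2 (Fin n) // ¬ e.IsDiag}),
      Antitone (fun k => w (σ k)) →
      L w = ∑ k, w (σ k) *
        (F ((Finset.Iic k).image σ) - F ((Finset.Iio k).image σ)))
    (X : Matrix (Fin n) (Fin n) ℝ) (hX : X.IsSymm)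
    (w : {e : Sym2 (Fin n) // ¬ e.IsDiag} → ℝ)
    (hw : ∀ (i j : Fin n) (hd : ¬ (s(i, j) : Sym2 (Fin n)).IsDiag),
      w ⟨s(i, j), hd⟩ = |X i j|)
    -- for each row `i`, `τ i` enumerates the off-diagonal entries of row `i`
    -- in decreasing order of absolute value:
    (τ : ∀ i : Fin n, Fin (n - 1) ≃ {j : Fin n // j ≠ i})
    (hτ : ∀ i : Fin n, Antitone (fun k => |X i ((τ i k) : Fin n)|)) :
    L w = ∑ i : Fin n, ∑ k : Fin (n - 1),
      (h ((k : ℕ) + 1) - h (k : ℕ)) * |X i ((τ i k) : Fin n)| := by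
  classical
  let N := Fintype.card {e : Sym2 (Fin n) // ¬ e.IsDiag}
  -- a sorting equiv
  let e0 : {e : Sym2 (Fin n) // ¬ e.IsDiag} ≃ Fin N :=
    Fintype.equivFin {e : Sym2 (Fin n) // ¬ e.IsDiag}
  let π : Equiv.Perm (Fin N) := Tuple.sort (fun k => -w (e0.symm k))
  let σ : Fin N ≃ {e : Sym2 (Fin n) // ¬ e.IsDiag} := π.trans e0.symm
  have hσ : Antitone (fun k => w (σ k)) := by
    intro a b hab
    have := Tuple.monotone_sort (fun k => -w (e0.symm k)) hab
    simpa [σ, π] using this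
  -- counting function
  let D : Fin n → Fin N → ℕ := fun v k => ((Finset.Iio k).filter fun j => v ∈ (σ j).1).card
  have hdeg : ∀ (s : Finset (Fin N)) (v : Fin n),
      edgeDeg (s.image σ) v = (s.filter fun j => v ∈ (σ j).1).card := by
    intro s v
    unfold edgeDeg
    rw [Finset.filter_image, Finset.card_image_of_injective _ σ.injective]
  have hsplit : ∀ (v : Fin n) (k : Fin N),
      ((Finset.Iic k).filter fun j => v ∈ (σ j).1).card =
        if v ∈ (σ k).1 then D v k + 1 else D v k := by
    intro v k
    rw [← Finset.Iio_insert, Finset.filter_insert]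
    split
    · rw [Finset.card_insert_of_notMem (by simp)]
    · rfl
  have key : ∀ k : Fin N, w (σ k) * (F ((Finset.Iic k).image σ) - F ((Finset.Iio k).image σ)) =
      ∑ v : Fin n, (if v ∈ (σ k).1 then w (σ k) * (h (D v k + 1) - h (D v k)) else 0) := by
    intro k
    rw [hF, hF, ← Finset.sum_sub_distrib, Finset.mul_sum]
    refine Finset.sum_congr rfl fun v _ => ?_
    rw [hdeg, hdeg, hsplit]
    split
    · ring
    · simp [D]
  rw [hL w σ hσ]
  calc (∑ k : Fin N, w (σ k) * (F ((Finset.Iic k).image σ) - F ((Finset.Iio k).image σ)))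
      = ∑ k : Fin N, ∑ v : Fin n,
          (if v ∈ (σ k).1 then w (σ k) * (h (D v k + 1) - h (D v k)) else 0) :=
        Finset.sum_congr rfl fun k _ => key k
    _ = ∑ v : Fin n, ∑ k : Fin N,
          (if v ∈ (σ k).1 then w (σ k) * (h (D v k + 1) - h (D v k)) else 0) :=
        Finset.sum_comm
    _ = ∑ i : Fin n, ∑ k : Fin (n - 1),
          (h ((k : ℕ) + 1) - h (k : ℕ)) * |X i ((τ i k) : Fin n)| := by
        refine Finset.sum_congr rfl fun v _ => ?_
        -- restrict the inner sum to edges containing `v`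
        rw [← Finset.sum_filter]
        set Sv : Finset (Fin N) := Finset.univ.filter (fun k => v ∈ (σ k).1) with hSv
        have hmemSv : ∀ k : Fin N, k ∈ Sv ↔ v ∈ (σ k).1 := by
          intro k; simp [hSv]
        have hcard : Sv.card = n - 1 := by
          have h1 : Sv.card = Fintype.card {k : Fin N // v ∈ (σ k).1} := by
            rw [Fintype.card_subtype]
          have h2 : Fintype.card {k : Fin N // v ∈ (σ k).1}
              = Fintype.card {e : {e : Sym2 (Fin n) // ¬ e.IsDiag} // v ∈ e.1} :=
            Fintype.card_congr (Equiv.subtypeEquiv σ (fun k => Iff.rfl))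
          have h3 : Fintype.card {e : {e : Sym2 (Fin n) // ¬ e.IsDiag} // v ∈ e.1} = Fintype.card {u : Fin n // u ≠ v} :=
            Fintype.card_congr (edgeOther v)
          have h4 : Fintype.card {u : Fin n // u ≠ v} = n - 1 := by
            simp [Fintype.card_subtype_compl]
          omega
        let mono : Fin (n - 1) ≃o {x // x ∈ Sv} := Sv.orderIsoOfFin hcard
        have hDmono : ∀ j : Fin (n - 1), D v ((mono j) : Fin N) = (j : ℕ) := by
          intro j
          have himg : ((Finset.Iio ((mono j) : Fin N)).filter fun k => v ∈ (σ k).1)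
              = (Finset.Iio j).image (fun j' => ((mono j') : Fin N)) := by
            ext k
            simp only [Finset.mem_filter, Finset.mem_Iio, Finset.mem_image]
            constructor
            · rintro ⟨hlt, hp⟩
              have hkSv : k ∈ Sv := (hmemSv k).mpr hp
              refine ⟨mono.symm ⟨k, hkSv⟩, ?_, ?_⟩
              · rw [← mono.lt_iff_lt, mono.apply_symm_apply]
                exact Subtype.mk_lt_mk.mpr hlt
              · rw [mono.apply_symm_apply]
            · rintro ⟨j', hj', rfl⟩
              refine ⟨?_, (hmemSv _).mp (mono j').2⟩
              exact Subtype.coe_lt_coe.mpr (mono.lt_iff_lt.mpr hj')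
          have hinj : Function.Injective (fun j' : Fin (n - 1) => ((mono j') : Fin N)) :=
            fun a b hab => mono.injective (Subtype.ext hab)
          show ((Finset.Iio ((mono j) : Fin N)).filter fun k => v ∈ (σ k).1).card = (j : ℕ)
          rw [himg, Finset.card_image_of_injective _ hinj, Fin.card_Iio]
        -- sum over Sv as a sum over Fin (n-1)
        have hsum : (∑ k ∈ Sv, w (σ k) * (h (D v k + 1) - h (D v k)))
            = ∑ j : Fin (n - 1), w (σ ((mono j) : Fin N)) *
                (h ((j : ℕ) + 1) - h (j : ℕ)) := by
          rw [← Finset.sum_attach Sv (fun k => w (σ k) * (h (D v k + 1) - h (D v k))),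
            ← Finset.univ_eq_attach,
            ← Equiv.sum_comp mono.toEquiv
              (fun x : {x // x ∈ Sv} => w (σ (x : Fin N)) * (h (D v x + 1) - h (D v x)))]
          refine Finset.sum_congr rfl fun j _ => ?_
          rw [show (mono.toEquiv j : Fin N) = ((mono j) : Fin N) from rfl, hDmono j]
        rw [hsum]
        -- match the two antitone enumerations
        let a : Fin (n - 1) → ℝ := fun j => w (σ ((mono j) : Fin N))
        let b : Fin (n - 1) → ℝ := fun j => |X v ((τ v j) : Fin n)|
        have ha : Antitone a := by
          intro i j hij
          exact hσ (Subtype.coe_le_coe.mpr (mono.le_iff_le.mpr hij))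
        have hb : Antitone b := hτ v
        let eS : {k : Fin N // k ∈ Sv} ≃ {e : {e : Sym2 (Fin n) // ¬ e.IsDiag} // v ∈ e.1} :=
          Equiv.subtypeEquiv σ (fun k => hmemSv k)
        let ρ : Equiv.Perm (Fin (n - 1)) :=
          mono.toEquiv.trans (eS.trans ((edgeOther v).trans (τ v).symm))
        have hab : ∀ j, a j = b (ρ j) := by
          intro j
          show w (σ ((mono j) : Fin N)) =
            |X v ((τ v ((τ v).symm (edgeOther v (eS (mono.toEquiv j)))) : Fin n))|
          rw [Equiv.apply_symm_apply]
          set e : {e : {e : Sym2 (Fin n) // ¬ e.IsDiag} // v ∈ e.1} := eS (mono.toEquiv j) with he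
          have hee : e.1 = σ ((mono j) : Fin N) := rfl
          have hspec : s(v, Sym2.Mem.other' e.2) = e.1.1 := Sym2.other_spec' e.2
          have hne : ((edgeOther v) e : Fin n) = Sym2.Mem.other' e.2 := rfl
          rw [hne, ← hw v (Sym2.Mem.other' e.2) (by rw [hspec]; exact e.1.2), ← hee]
          congr 1
          exact Subtype.ext hspec.symm
        have hEq : a = b := aux_antitone_eq a b ha hb ρ hab
        refine Finset.sum_congr rfl fun j _ => ?_
        rw [show w (σ ((mono j) : Fin N)) = a j from rfl, hEq]
        exact mul_comm _ _
end

section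
/- Let c_0 ≥ c_1 ≥ ... ≥ c_{m-1} ≥ 0 and w ∈ ℝ^m with |w_1| ≥ |w_2| ≥ ... ≥ |w_m| (already sorted). If the values u_k = |w_k| − c_k are strictly decreasing and all positive, then the minimizer of Σ_k c_k|x_{(k)}| + (1/2)‖x − w‖² is x*_k = sign(w_k)(|w_k| − c_k); i.e., when no ties or sign flips occur the proximal operator applies per-rank shrinkage. -/
open Finset

/-- Rearrangement bound: `Ω(y) ≥ ∑ c_k |y_k|` when `c` is antitone. -/
lemma omega_ge {m : ℕ} (c : ℕ → ℝ) (y : Fin m → ℝ)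
    (hcanti : ∀ k, c (k + 1) ≤ c k) :
    ∑ k : Fin m, c k * |y k| ≤ omegaReg c y := by
  set σ := Tuple.sort (fun i => -|y i|) with hσ
  have hc : Antitone (fun k : Fin m => c k) := by
    have hnat : Antitone c := antitone_nat_of_succ_le hcanti
    exact fun i j hij => hnat hij
  have hg : Antitone (fun k : Fin m => |y (σ k)|) := by
    have hmono := Tuple.monotone_sort (fun i => -|y i|)
    intro i j hij
    have h := hmono hij
    simp only [Function.comp] at h
    linarith
  have hmv : Monovary (fun k : Fin m => c k) (fun k => |y (σ k)|) :=
    hc.monovary hg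
  have h := hmv.sum_smul_comp_perm_le_sum_smul (σ := σ⁻¹)
  simp only [smul_eq_mul, Equiv.Perm.inv_def, Equiv.apply_symm_apply] at h
  calc ∑ k : Fin m, c k * |y k| ≤ ∑ k : Fin m, c k * |y (σ k)| := h
    _ = omegaReg c y := by simp [omegaReg, sortedAbs, hσ]

/-- Scalar soft-threshold optimality for `0 ≤ c < |w|`. -/
lemma scalar_opt (c w t : ℝ) (hc : 0 ≤ c) (hw : c < |w|) :
    c * |Real.sign w * (|w| - c)| + (1/2) * (Real.sign w * (|w| - c) - w) ^ 2
      ≤ c * |t| + (1/2) * (t - w) ^ 2 := by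
  have hsw : Real.sign w * w = |w| := by
    rcases lt_trichotomy w 0 with h|h|h
    · rw [Real.sign_of_neg h, abs_of_neg h]; ring
    · subst h; simp at hw; linarith
    · rw [Real.sign_of_pos h, abs_of_pos h]; ring
  have hs1 : |Real.sign w| = 1 := by
    rcases lt_trichotomy w 0 with h|h|h
    · rw [Real.sign_of_neg h]; norm_num
    · subst h; simp at hw; linarith
    · rw [Real.sign_of_pos h]; norm_num
  set s := Real.sign w with hsdef
  set A := |w| with hAdef
  have hA : 0 ≤ A := abs_nonneg w
  have habs : |s * (A - c)| = A - c := by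
    rw [abs_mul, hs1, one_mul, abs_of_pos (by linarith)]
  have hst : s * t ≤ |t| := by
    calc s * t ≤ |s * t| := le_abs_self _
      _ = |t| := by rw [abs_mul, hs1, one_mul]
  have hs2 : s ^ 2 = 1 := by
    have h := abs_mul_abs_self s; rw [hs1] at h; nlinarith
  have hw2 : w ^ 2 = A ^ 2 := (sq_abs w).symm
  rw [habs]
  have htw : t * w = (s * t) * A := by
    have h : (s * t) * (s * w) = s ^ 2 * (t * w) := by ring
    rw [hsw, hs2] at h; linarith
  have hL : (s * (A - c) - w) ^ 2 = c ^ 2 := by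
    have h : (s * (A - c) - w) ^ 2
        = s ^ 2 * (A - c) ^ 2 - 2 * (A - c) * (s * w) + w ^ 2 := by ring
    rw [hs2, hsw, hw2] at h; linarith
  rw [hL]
  nlinarith [sq_nonneg (|t| - (A - c)), mul_le_mul_of_nonneg_left hst hA, sq_abs t]

/-- if `|w|` is already sorted decreasingly and the shrunken
values `u_k = |w_k| − c_k` are strictly decreasing and positive, then the
proximal operator acts by per-rank shrinkage:
`x*_k = sign(w_k)(|w_k| − c_k)` minimizes `Ω(x) + (1/2)‖x − w‖²`. -/
theorem prox_per_rank_shrinkage (m : ℕ) (c : ℕ → ℝ) (w : Fin m → ℝ)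
    (hm : 1 ≤ m)
    (hnonneg : ∀ k, 0 ≤ c k)
    (hcanti : ∀ k, c (k + 1) ≤ c k)
    (hw_sorted : Antitone (fun k : Fin m => |w k|))
    (hu_strict : StrictAnti (fun k : Fin m => |w k| - c k))
    (hu_pos : ∀ k : Fin m, 0 < |w k| - c k) :
    let f : (Fin m → ℝ) → ℝ :=
      fun x => omegaReg c x + (1 / 2) * ∑ i, (x i - w i) ^ 2
    let xstar : Fin m → ℝ := fun k => Real.sign (w k) * (|w k| - c k)
    ∀ y : Fin m → ℝ, f xstar ≤ f y := by
  intro f xstar y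
  -- `|xstar k| = |w k| - c k`
  have habsx : ∀ k : Fin m, |xstar k| = |w k| - c k := by
    intro k
    have hwk : w k ≠ 0 := by
      intro h
      have := hu_pos k
      rw [h] at this; simp at this
      exact absurd this (not_lt.mpr (hnonneg k))
    have hs1 : |Real.sign (w k)| = 1 := by
      rcases lt_trichotomy (w k) 0 with h|h|h
      · rw [Real.sign_of_neg h]; norm_num
      · exact absurd h hwk
      · rw [Real.sign_of_pos h]; norm_num
    show |Real.sign (w k) * (|w k| - c k)| = _
    rw [abs_mul, hs1, one_mul, abs_of_pos (hu_pos k)]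
  -- the sort of `xstar` is the identity, so `sortedAbs xstar k = |xstar k|`
  have hsortx : sortedAbs xstar = fun k => |xstar k| := by
    have heq : (fun i : Fin m => -|xstar i|) = fun i => -(|w i| - c i) := by
      funext i; rw [habsx i]
    have hmono : Monotone (fun i : Fin m => -|xstar i|) := by
      rw [heq]
      intro i j hij
      have h := hu_strict.antitone hij
      simp only [neg_le_neg_iff]
      linarith
    have hid : Tuple.sort (fun i : Fin m => -|xstar i|) = Equiv.refl _ :=
      (Tuple.sort_eq_refl_iff_monotone).mpr hmono
    funext k
    simp [sortedAbs, hid]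
  have hfx : f xstar = ∑ k : Fin m, (c k * |xstar k| + (1/2) * (xstar k - w k) ^ 2) := by
    show omegaReg c xstar + _ = _
    rw [omegaReg, hsortx, Finset.mul_sum, ← Finset.sum_add_distrib]
  have hfy : ∑ k : Fin m, (c k * |y k| + (1/2) * (y k - w k) ^ 2) ≤ f y := by
    show _ ≤ omegaReg c y + _
    have h := omega_ge c y hcanti
    rw [Finset.sum_add_distrib, ← Finset.mul_sum]
    norm_num
    linarith
  refine hfx ▸ le_trans (Finset.sum_le_sum fun k _ => ?_) hfy
  exact scalar_opt (c k) (w k) (y k) (hnonneg k) (by linarith [hu_pos k])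
end
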